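/- If the smooth function g : I → ℝ satisfies g'(u)² < 1 and solves (1 − g'²)g' + u g'' + u² g'(1 − g'²) = 0 on an interval I with g' nonvanishing on I, then there exists a constant C ∈ ℝ such that g'(u)² = 1/(1 + u² e^{u² + C}) for all u ∈ I with u ≠ 0. -/

import Mathlib

theorem stmt13 (a b : ℝ) (g g' g'' : ℝ → ℝ)
    (hg' : ∀ u ∈ Set.Ioo a b, HasDerivAt g (g' u) u)
    (hg'' : ∀ u ∈ Set.Ioo a b, HasDerivAt g' (g'' u) u)
    (hsp : ∀ u ∈ Set.Ioo a b, (g' u) ^ 2 < 1)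
    (hne : ∀ u ∈ Set.Ioo a b, g' u ≠ 0)
    (hode : ∀ u ∈ Set.Ioo a b,
      (1 - (g' u) ^ 2) * g' u + u * g'' u + u ^ 2 * g' u * (1 - (g' u) ^ 2) = 0) :
    ∃ C : ℝ, ∀ u ∈ Set.Ioo a b, u ≠ 0 →
      (g' u) ^ 2 = 1 / (1 + u ^ 2 * Real.exp (u ^ 2 + C)) := by
  classical
  rcases Set.eq_empty_or_nonempty (Set.Ioo a b) with hemp | ⟨u0, hu0⟩
  · exact ⟨0, fun u hu _ => absurd hu (hemp ▸ Set.notMem_empty u)⟩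
  have hzero : (0:ℝ) ∉ Set.Ioo a b := by
    intro h0
    have h1 := hode 0 h0
    have h2 := hsp 0 h0
    have h3 := hne 0 h0
    have h1' : (1 - g' 0 ^ 2) * g' 0 = 0 := by nlinarith [h1]
    rcases mul_eq_zero.1 h1' with h | h
    · nlinarith
    · exact h3 h
  have hun : ∀ u ∈ Set.Ioo a b, u ≠ 0 := fun u hu h => hzero (h ▸ hu)
  set F : ℝ → ℝ := fun u => Real.log (1 - g' u ^ 2) - Real.log (g' u ^ 2)
      - Real.log (u ^ 2) - u ^ 2 with hF
  have hFd : ∀ u ∈ Set.Ioo a b, HasDerivAt F 0 u := by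
    intro u hu
    have hu0 := hun u hu
    have hp := hne u hu
    have hh : (0:ℝ) < g' u ^ 2 := pow_two_pos_of_ne_zero hp
    have hh1 : g' u ^ 2 < 1 := hsp u hu
    have h1ne : 1 - g' u ^ 2 ≠ 0 := by linarith
    have hu2 : u ^ 2 ≠ 0 := pow_ne_zero 2 hu0
    have hpd := hg'' u hu
    have hsq : HasDerivAt (fun x => g' x ^ 2) ((2:ℕ) * g' u ^ 1 * g'' u) u := hpd.pow 2
    have hA : HasDerivAt (fun x => Real.log (1 - g' x ^ 2))
        ((0 - (2:ℕ) * g' u ^ 1 * g'' u) / (1 - g' u ^ 2)) u :=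
      (((hasDerivAt_const u (1:ℝ)).sub hsq).log h1ne)
    have hB : HasDerivAt (fun x => Real.log (g' x ^ 2))
        (((2:ℕ) * g' u ^ 1 * g'' u) / (g' u ^ 2)) u := hsq.log hh.ne'
    have hid : HasDerivAt (fun x : ℝ => x ^ 2) ((2:ℕ) * u ^ 1 * 1) u :=
      (hasDerivAt_id u).pow 2
    have hD : HasDerivAt (fun x : ℝ => Real.log (x ^ 2))
        (((2:ℕ) * u ^ 1 * 1) / u ^ 2) u := hid.log hu2
    have hcomb := ((hA.sub hB).sub hD).sub hid
    convert hcomb using 1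
    · rfl
    · rfl
    · rfl
    have hode' := hode u hu
    have huk : u * g'' u = -(1 + u ^ 2) * g' u * (1 - g' u ^ 2) := by nlinarith [hode']
    have hk : g'' u = (-(1 + u ^ 2) * g' u * (1 - g' u ^ 2)) / u := by
      rw [eq_div_iff hu0]; linarith [huk, mul_comm (g'' u) u]
    rw [hk]
    field_simp
    ring
  have key : ∀ x ∈ Set.Ioo a b, ∀ y ∈ Set.Ioo a b, x ≤ y → F y = F x := by
    intro x hx y hy hxy
    have hsub : Set.Icc x y ⊆ Set.Ioo a b := fun z hz =>
      ⟨hx.1.trans_le hz.1, hz.2.trans_lt hy.2⟩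
    exact constant_of_has_deriv_right_zero
      (fun z hz => ((hFd z (hsub hz)).continuousAt).continuousWithinAt)
      (fun z hz => ((hFd z (hsub (Set.mem_Icc_of_Ico hz))).hasDerivWithinAt))
      y (Set.right_mem_Icc.2 hxy)
  have hconst : ∀ u ∈ Set.Ioo a b, F u = F u0 := by
    intro u hu
    rcases le_total u u0 with h | h
    · exact (key u hu u0 hu0 h).symm
    · exact key u0 hu0 u hu h
  refine ⟨F u0, fun u hu hu0' => ?_⟩
  have hCu := hconst u hu
  have hp := hne u hu
  have hh : (0:ℝ) < g' u ^ 2 := pow_two_pos_of_ne_zero hp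
  have hh1 : g' u ^ 2 < 1 := hsp u hu
  have hu2 : (0:ℝ) < u ^ 2 := pow_two_pos_of_ne_zero hu0'
  have hlog : Real.log ((1 - g' u ^ 2) / (g' u ^ 2 * u ^ 2)) = u ^ 2 + F u0 := by
    rw [Real.log_div (by linarith) (by positivity), Real.log_mul hh.ne' hu2.ne']
    simp only [hF] at hCu ⊢
    linarith [hCu]
  have hexp : Real.exp (u ^ 2 + F u0) = (1 - g' u ^ 2) / (g' u ^ 2 * u ^ 2) := by
    rw [← hlog, Real.exp_log (div_pos (by linarith) (by positivity))]
  rw [hexp]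
  have hX : 1 + u ^ 2 * ((1 - g' u ^ 2) / (g' u ^ 2 * u ^ 2)) = 1 / g' u ^ 2 := by
    field_simp
    ring
  rw [hX, one_div_one_div]
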